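/- Let D ⊆ ℂ be an open connected set, V a finite-dimensional complex vector space, and A : D → End(V) a holomorphic map (i.e., all matrix entries with respect to a fixed basis are holomorphic). Then for every p ∈ D, the order of vanishing of the holomorphic function z ↦ det A(z) at p is at least the dimension of the kernel of A(p). (If det A vanishes identically near p the order is interpreted as +∞.) -/

import Mathlib

/-- For a holomorphic family `A : D → End(ℂⁿ)` on an open connected set `D`, the order of
vanishing of `det A(z)` at `p ∈ D` is at least `dim ker A(p)`; i.e. `det A(z)` can be written
near `p` as `(z - p) ^ (dim ker A(p))` times a function analytic at `p`. -/
theorem stmt4 (n : ℕ) (D : Set ℂ) (hD : IsOpen D) (hconn : IsConnected D)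
    (A : ℂ → Matrix (Fin n) (Fin n) ℂ)
    (hA : ∀ i j, DifferentiableOn ℂ (fun z => A z i j) D)
    (p : ℂ) (hp : p ∈ D) :
    ∃ g : ℂ → ℂ, AnalyticAt ℂ g p ∧
      ∀ᶠ z in nhds p,
        (A z).det = (z - p) ^ Module.finrank ℂ (LinearMap.ker (A p).mulVecLin) * g z := by
  classical
  set K := LinearMap.ker (A p).mulVecLin with hKdef
  set k := Module.finrank ℂ K with hkdef
  obtain ⟨W, hW⟩ := Submodule.exists_isCompl K
  set m := Module.finrank ℂ W with hmdef
  have hkm : k + m = n := by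
    have h1 := Submodule.finrank_add_eq_of_isCompl hW
    rwa [Module.finrank_fin_fun] at h1
  have hkn : k ≤ n := le_of_add_le_left hkm.le
  -- a basis of ℂⁿ whose first `k` vectors lie in the kernel `K`
  let bK := Module.finBasis ℂ K
  let bW := Module.finBasis ℂ W
  let e : Fin k ⊕ Fin m ≃ Fin n := finSumFinEquiv.trans (finCongr hkm)
  let b : Module.Basis (Fin k ⊕ Fin m) ℂ (Fin n → ℂ) :=
    (bK.prod bW).map (Submodule.prodEquivOfIsCompl K W hW)
  let v : Module.Basis (Fin n) ℂ (Fin n → ℂ) := b.reindex e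
  have hv : ∀ j : Fin n, (j : ℕ) < k → v j ∈ K := by
    intro j hj
    have he : e.symm j = Sum.inl ⟨(j : ℕ), hj⟩ := by
      apply e.injective
      rw [Equiv.apply_symm_apply]
      ext
      simp [e, finSumFinEquiv]
    have : v j = Submodule.prodEquivOfIsCompl K W hW ((bK.prod bW) (Sum.inl ⟨(j : ℕ), hj⟩)) := by
      simp [v, Module.Basis.reindex_apply, he, b, Module.Basis.map_apply]
    rw [this, Module.Basis.prod_apply, Sum.elim_inl, Function.comp_apply,
      Submodule.coe_prodEquivOfIsCompl']
    simp [Submodule.coe_mem]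
  -- the change-of-basis matrix whose columns are the `v j`
  let P : Matrix (Fin n) (Fin n) ℂ := (Pi.basisFun ℂ (Fin n)).toMatrix v
  have hPvj : ∀ i j, P i j = v j i := by
    intro i j
    simp [P, Module.Basis.toMatrix_apply]
  have : Invertible P := (Pi.basisFun ℂ (Fin n)).invertibleToMatrix v
  have hPdet : P.det ≠ 0 := (Matrix.isUnit_det_of_invertible P).ne_zero
  -- entries of `A z * P`
  have hAa : ∀ i j, AnalyticAt ℂ (fun z => A z i j) p :=
    fun i j => (hA i j).analyticAt (hD.mem_nhds hp)
  let M : ℂ → Matrix (Fin n) (Fin n) ℂ := fun z => A z * P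
  have hMa : ∀ i j, AnalyticAt ℂ (fun z => M z i j) p := by
    intro i j
    have hfe : (fun z => M z i j) = fun z => ∑ l, A z i l * P l j := by
      funext z; simp [M, Matrix.mul_apply]
    rw [hfe]
    exact Finset.analyticAt_fun_sum _ (fun l _ => (hAa i l).mul analyticAt_const)
  have hM0 : ∀ j : Fin n, (j : ℕ) < k → ∀ i, M p i j = 0 := by
    intro j hj i
    have hker : (A p).mulVecLin (v j) = 0 := hv j hj
    have : (A p).mulVec (v j) = 0 := by rwa [Matrix.mulVecLin_apply] at hker
    have h2 : M p i j = ((A p).mulVec (v j)) i := by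
      simp [M, Matrix.mul_apply, Matrix.mulVec, dotProduct, hPvj]
    rw [h2, this]; rfl
  -- factored matrix
  let B : ℂ → Matrix (Fin n) (Fin n) ℂ := fun z =>
    Matrix.of fun i j => if (j : ℕ) < k then dslope (fun w => M w i j) p z else M z i j
  have key : ∀ (f : ℂ → ℂ), f p = 0 → ∀ z, f z = (z - p) * dslope f p z := by
    intro f hf z
    rcases eq_or_ne z p with rfl | hz
    · simp [hf]
    · rw [dslope_of_ne _ hz, slope_def_field, hf, sub_zero]
      field_simp [sub_ne_zero.mpr hz]
  have hdet : ∀ z, (M z).det = (z - p) ^ k * (B z).det := by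
    intro z
    have hMeq : M z = Matrix.of fun (i j : Fin n) => (if (j : ℕ) < k then z - p else 1) * B z i j := by
      ext i j
      by_cases hj : (j : ℕ) < k
      · simp only [Matrix.of_apply, if_pos hj, B]
        exact key (fun w => M w i j) (hM0 j hj i) z
      · simp [B, hj]
    rw [hMeq, Matrix.det_mul_row]
    congr 1
    have h1 : ∏ j : Fin n, (if (j : ℕ) < k then z - p else 1)
        = ∏ i ∈ Finset.range n, (if i < k then z - p else 1) := by
      rw [Finset.prod_range fun i => if i < k then z - p else 1]
    rw [h1, Finset.prod_ite, Finset.prod_const, Finset.prod_const, one_pow, mul_one]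
    congr 1
    have : Finset.filter (fun i => i < k) (Finset.range n) = Finset.range k := by
      ext i
      simp only [Finset.mem_filter, Finset.mem_range]
      omega
    rw [this, Finset.card_range]
  have hBa : ∀ i j, AnalyticAt ℂ (fun z => B z i j) p := by
    intro i j
    by_cases hj : (j : ℕ) < k
    · simp only [B, Matrix.of_apply, if_pos hj]
      obtain ⟨q, hq⟩ := hMa i j
      exact ⟨_, hq.has_fpower_series_dslope_fslope⟩
    · simpa only [B, Matrix.of_apply, if_neg hj] using hMa i j
  have hdetB : AnalyticAt ℂ (fun z => (B z).det) p := by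
    have hfe : (fun z => (B z).det)
        = fun z => ∑ σ : Equiv.Perm (Fin n),
            (((Equiv.Perm.sign σ : ℤ) : ℂ)) * ∏ i, B z (σ i) i := by
      funext z; rw [Matrix.det_apply']
    rw [hfe]
    exact Finset.analyticAt_fun_sum _ fun σ _ =>
      analyticAt_const.mul (Finset.analyticAt_fun_prod _ fun i _ => hBa (σ i) i)
  refine ⟨fun z => (B z).det * (P.det)⁻¹, hdetB.mul analyticAt_const, ?_⟩
  refine Filter.Eventually.of_forall fun z => ?_
  have h1 : (A z).det * P.det = (z - p) ^ k * (B z).det := by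
    rw [← Matrix.det_mul]; exact hdet z
  have h2 : (A z).det = (z - p) ^ k * ((B z).det * (P.det)⁻¹) := by
    field_simp
    linear_combination h1
  exact h2
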